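/- Let G be a finite graph with loops and let H be obtained from G by deleting k = l + s + m edges, where l of the deleted edges join two vertices with opinion +1 (under an optimal opinion function of the graph before each deletion), s join two vertices with opinion -1, and m are the remaining deleted edges. Then -4l - 2m ≤ γ(G) - γ(H) ≤ 2k. -/

import Mathlib

open scoped Classical
open Finset

/-- Sum of opinions over the closed neighborhood of `v` (closed since every
vertex has a loop, so `v` itself is counted). -/
noncomputable def nbrSum {V : Type*} [Fintype V] (G : SimpleGraph V) (f : V → ℤ) (v : V) : ℤ :=
  ∑ w ∈ univ.filter (fun w => G.Adj v w ∨ w = v), f w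

/-- `f` is an opinion function: every value is `1` or `-1`. -/
def IsOpinion {V : Type*} (f : V → ℤ) : Prop := ∀ v, f v = 1 ∨ f v = -1

/-- The set of vertices voting 'yes'. -/
noncomputable def yesVoters {V : Type*} [Fintype V] (G : SimpleGraph V) (f : V → ℤ) : Finset V :=
  univ.filter (fun v => 0 < nbrSum G f v)

/-- `f` is strictly majoritarian on `G`: more than `|V|/2` vertices vote 'yes'. -/
def Majoritarian {V : Type*} [Fintype V] (G : SimpleGraph V) (f : V → ℤ) : Prop :=
  Fintype.card V < 2 * (yesVoters G f).card

/-- The strict domination number: minimum of `f(V)` over strictly majoritarian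
opinion functions. -/
noncomputable def gamma {V : Type*} [Fintype V] (G : SimpleGraph V) : ℤ :=
  sInf {t : ℤ | ∃ f : V → ℤ, IsOpinion f ∧ Majoritarian G f ∧ t = ∑ v, f v}

section Helpers

variable {V : Type*} [Fintype V]

lemma nbrSum_mono (G : SimpleGraph V) {f g : V → ℤ} (h : ∀ v, f v ≤ g v) (v : V) :
    nbrSum G f v ≤ nbrSum G g v :=
  Finset.sum_le_sum fun w _ => h w

lemma nbrSum_congr (G : SimpleGraph V) {f g : V → ℤ} {v : V}
    (h : ∀ w, G.Adj v w ∨ w = v → f w = g w) :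
    nbrSum G f v = nbrSum G g v :=
  Finset.sum_congr rfl fun w hw => h w (by simpa using hw)

lemma nbrSum_add_two (G : SimpleGraph V) {f g : V → ℤ} (hle : ∀ v, f v ≤ g v) {v c : V}
    (hc : G.Adj v c ∨ c = v) (hfc : f c + 2 ≤ g c) :
    nbrSum G f v + 2 ≤ nbrSum G g v := by
  have hcm : c ∈ univ.filter (fun w => G.Adj v w ∨ w = v) := by
    simp only [mem_filter, mem_univ, true_and]; exact hc
  unfold nbrSum
  rw [← Finset.add_sum_erase _ g hcm, ← Finset.add_sum_erase _ f hcm]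
  have h2 : ∑ x ∈ (univ.filter (fun w => G.Adj v w ∨ w = v)).erase c, f x
      ≤ ∑ x ∈ (univ.filter (fun w => G.Adj v w ∨ w = v)).erase c, g x :=
    Finset.sum_le_sum fun w _ => hle w
  linarith

lemma nbrSum_delete_of_ne (G : SimpleGraph V) {a b : V} (f : V → ℤ) {v : V}
    (hva : v ≠ a) (hvb : v ≠ b) :
    nbrSum (G.deleteEdges {s(a, b)}) f v = nbrSum G f v := by
  unfold nbrSum
  congr 1
  ext w
  simp only [mem_filter, mem_univ, true_and, SimpleGraph.deleteEdges_adj,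
    Set.mem_singleton_iff]
  constructor
  · rintro (⟨h1, _⟩ | h)
    · exact Or.inl h1
    · exact Or.inr h
  · rintro (h1 | h)
    · refine Or.inl ⟨h1, ?_⟩
      rw [Sym2.eq_iff]
      rintro (⟨rfl, rfl⟩ | ⟨rfl, rfl⟩)
      · exact hva rfl
      · exact hvb rfl
    · exact Or.inr h

lemma nbrSum_delete_left (G : SimpleGraph V) {a b : V} (hab : a ≠ b) (hadj : G.Adj a b)
    (f : V → ℤ) :
    nbrSum (G.deleteEdges {s(a, b)}) f a = nbrSum G f a - f b := by
  have hbmem : b ∈ univ.filter (fun w => G.Adj a w ∨ w = a) := by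
    simp only [mem_filter, mem_univ, true_and]; exact Or.inl hadj
  have hset : univ.filter (fun w => (G.deleteEdges {s(a, b)}).Adj a w ∨ w = a)
      = (univ.filter (fun w => G.Adj a w ∨ w = a)).erase b := by
    ext w
    simp only [mem_filter, mem_univ, true_and, mem_erase, SimpleGraph.deleteEdges_adj,
      Set.mem_singleton_iff]
    constructor
    · rintro (⟨h1, h2⟩ | h)
      · refine ⟨?_, Or.inl h1⟩
        rintro rfl
        exact h2 rfl
      · exact ⟨fun hc => hab (h.symm.trans hc), Or.inr h⟩
    · rintro ⟨hw, h1 | h⟩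
      · refine Or.inl ⟨h1, ?_⟩
        rw [Sym2.eq_iff]
        rintro (⟨-, rfl⟩ | ⟨rfl, -⟩)
        · exact hw rfl
        · exact hab rfl
      · exact Or.inr h
  unfold nbrSum
  rw [← Finset.sum_erase_eq_sub hbmem, ← hset]
  congr 1
  ext w
  simp only [mem_filter]

lemma nbrSum_delete_right (G : SimpleGraph V) {a b : V} (hab : a ≠ b) (hadj : G.Adj a b)
    (f : V → ℤ) :
    nbrSum (G.deleteEdges {s(a, b)}) f b = nbrSum G f b - f a := by
  have hswap : ({s(a, b)} : Set (Sym2 V)) = {s(b, a)} := by rw [Sym2.eq_swap]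
  rw [hswap]
  exact nbrSum_delete_left G hab.symm hadj.symm f

lemma gamma_set_nonempty (G : SimpleGraph V) [Nonempty V] :
    {t : ℤ | ∃ f : V → ℤ, IsOpinion f ∧ Majoritarian G f ∧ t = ∑ v, f v}.Nonempty := by
  refine ⟨∑ _v : V, (1 : ℤ), fun _ => 1, fun _ => Or.inl rfl, ?_, rfl⟩
  have hy : yesVoters G (fun _ => (1 : ℤ)) = univ := by
    ext v
    simp only [yesVoters, mem_filter, mem_univ, true_and, iff_true]
    have hvm : v ∈ univ.filter (fun w => G.Adj v w ∨ w = v) := by simp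
    have hpos : 0 < (univ.filter (fun w => G.Adj v w ∨ w = v)).card :=
      Finset.card_pos.mpr ⟨v, hvm⟩
    unfold nbrSum
    rw [Finset.sum_const, nsmul_eq_mul, mul_one]
    exact_mod_cast hpos
  unfold Majoritarian
  rw [hy, Finset.card_univ]
  have : 0 < Fintype.card V := Fintype.card_pos
  omega

lemma gamma_set_bdd (G : SimpleGraph V) :
    BddBelow {t : ℤ | ∃ f : V → ℤ, IsOpinion f ∧ Majoritarian G f ∧ t = ∑ v, f v} := by
  refine ⟨-(Fintype.card V : ℤ), ?_⟩
  rintro t ⟨f, hf, -, rfl⟩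
  calc -(Fintype.card V : ℤ) = ∑ _v : V, (-1 : ℤ) := by
        rw [Finset.sum_const, nsmul_eq_mul, Finset.card_univ]; ring
    _ ≤ ∑ v, f v := Finset.sum_le_sum fun v _ => by
        rcases hf v with h | h <;> rw [h] <;> norm_num

lemma gamma_le (G : SimpleGraph V) {f : V → ℤ} (hf : IsOpinion f) (hm : Majoritarian G f) :
    gamma G ≤ ∑ v, f v :=
  csInf_le (gamma_set_bdd G) ⟨f, hf, hm, rfl⟩

lemma gamma_spec (G : SimpleGraph V) [Nonempty V] :
    ∃ f : V → ℤ, IsOpinion f ∧ Majoritarian G f ∧ gamma G = ∑ v, f v :=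
  Int.csInf_mem (gamma_set_nonempty G) (gamma_set_bdd G)

lemma maj_of_le {G G' : SimpleGraph V} {f g : V → ℤ}
    (h : ∀ v, 0 < nbrSum G f v → 0 < nbrSum G' g v) (hm : Majoritarian G f) :
    Majoritarian G' g := by
  refine lt_of_lt_of_le hm ?_
  have hsub : yesVoters G f ⊆ yesVoters G' g := by
    intro v hv
    simp only [yesVoters, mem_filter, mem_univ, true_and] at *
    exact h v hv
  exact Nat.mul_le_mul_left 2 (Finset.card_le_card hsub)

/-- Flip all vertices in `S` to opinion `1`. -/
noncomputable def flipUp (S : Finset V) (f : V → ℤ) : V → ℤ := fun v => if v ∈ S then 1 else f v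

lemma flipUp_opinion {S : Finset V} {f : V → ℤ} (hf : IsOpinion f) : IsOpinion (flipUp S f) := by
  intro v
  unfold flipUp
  split
  · exact Or.inl rfl
  · exact hf v

lemma flipUp_le {S : Finset V} {f : V → ℤ} (hf : IsOpinion f) (v : V) : f v ≤ flipUp S f v := by
  unfold flipUp
  split
  · rcases hf v with h | h <;> rw [h] <;> norm_num
  · exact le_rfl

lemma flipUp_eq_of_not_mem {S : Finset V} {f : V → ℤ} {v : V} (hv : v ∉ S) :
    flipUp S f v = f v := if_neg hv

lemma flipUp_eq_of_mem {S : Finset V} {f : V → ℤ} {v : V} (hv : v ∈ S) :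
    flipUp S f v = 1 := if_pos hv

lemma sum_flipUp {S : Finset V} {f : V → ℤ} (hS : ∀ v ∈ S, f v = -1) :
    ∑ v, flipUp S f v = (∑ v, f v) + 2 * S.card := by
  have h1 : ∀ v : V, flipUp S f v = f v + (if v ∈ S then 2 else 0) := by
    intro v
    unfold flipUp
    by_cases h : v ∈ S
    · rw [if_pos h, if_pos h, hS v h]; ring
    · rw [if_neg h, if_neg h]; ring
  rw [Finset.sum_congr rfl fun v _ => h1 v, Finset.sum_add_distrib]
  congr 1
  rw [Finset.sum_ite_mem, Finset.univ_inter, Finset.sum_const, nsmul_eq_mul]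
  ring

end Helpers

section Steps

variable {V : Type*} [Fintype V] [Nonempty V]

/-- Upper bound auxiliary: the optimal function for `H` with a `-1` second endpoint. -/
lemma step_upper_aux (G : SimpleGraph V) {a b : V} (hab : a ≠ b) (hadj : G.Adj a b)
    {h : V → ℤ} (hop : IsOpinion h) (hmaj : Majoritarian (G.deleteEdges {s(a, b)}) h)
    (hb : h b = -1) :
    gamma G ≤ (∑ v, h v) + 2 := by
  set H := G.deleteEdges {s(a, b)} with hH
  set g := flipUp {b} h with hg
  have hSneg : ∀ v ∈ ({b} : Finset V), h v = -1 := by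
    intro v hv; rw [Finset.mem_singleton] at hv; subst hv; exact hb
  have hgle : ∀ v, h v ≤ g v := flipUp_le hop
  have hga : g a = h a := flipUp_eq_of_not_mem (by simp [hab])
  have hgb : g b = 1 := flipUp_eq_of_mem (by simp)
  have hHadjab : ¬ H.Adj a b := by
    simp [hH, SimpleGraph.deleteEdges_adj]
  have key : ∀ v, 0 < nbrSum H h v → 0 < nbrSum G g v := by
    intro v hv
    by_cases hva : v = a
    · rw [hva] at hv ⊢
      have e1 : nbrSum H g a = nbrSum G g a - g b := nbrSum_delete_left G hab hadj g
      have e2 : nbrSum H g a = nbrSum H h a := by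
        refine nbrSum_congr H fun w hw => ?_
        rcases eq_or_ne w b with rfl | hwb
        · rcases hw with hw | hw
          · exact absurd hw hHadjab
          · exact absurd hw hab.symm
        · rw [hg, flipUp_eq_of_not_mem (by simp [hwb])]
      rw [hgb] at e1
      omega
    · by_cases hvb : v = b
      · rw [hvb] at hv ⊢
        have e1 : nbrSum H g b = nbrSum G g b - g a := nbrSum_delete_right G hab hadj g
        have e2 : nbrSum H h b + 2 ≤ nbrSum H g b := by
          refine nbrSum_add_two H hgle (Or.inr rfl) ?_
          rw [hb, hgb]; norm_num
        have hga1 : -1 ≤ g a := by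
          rw [hga]; rcases hop a with h' | h' <;> rw [h'] <;> norm_num
        omega
      · have e1 : nbrSum H g v = nbrSum G g v := nbrSum_delete_of_ne G g hva hvb
        have e2 : nbrSum H h v ≤ nbrSum H g v := nbrSum_mono H hgle v
        omega
  have hmaj' : Majoritarian G g := maj_of_le key hmaj
  have hsum : ∑ v, g v = (∑ v, h v) + 2 := by
    rw [hg, sum_flipUp hSneg]; simp
  calc gamma G ≤ ∑ v, g v := gamma_le G (flipUp_opinion hop) hmaj'
    _ = (∑ v, h v) + 2 := hsum

lemma step_upper (G : SimpleGraph V) {a b : V} (hab : a ≠ b) (hadj : G.Adj a b) :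
    gamma G - gamma (G.deleteEdges {s(a, b)}) ≤ 2 := by
  obtain ⟨h, hop, hmaj, hsum⟩ := gamma_spec (G.deleteEdges {s(a, b)})
  rw [hsum]
  by_cases hb : h b = -1
  · have := step_upper_aux G hab hadj hop hmaj hb
    omega
  · by_cases ha : h a = -1
    · have hswap : ({s(a, b)} : Set (Sym2 V)) = {s(b, a)} := by rw [Sym2.eq_swap]
      rw [hswap] at hmaj
      have := step_upper_aux G hab.symm hadj.symm hop hmaj ha
      omega
    · -- both endpoints are +1 : h itself works for G
      have ha1 : h a = 1 := (hop a).resolve_right ha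
      have hb1 : h b = 1 := (hop b).resolve_right hb
      have key : ∀ v, 0 < nbrSum (G.deleteEdges {s(a, b)}) h v → 0 < nbrSum G h v := by
        intro v hv
        by_cases hva : v = a
        · rw [hva] at hv ⊢
          have e1 : nbrSum (G.deleteEdges {s(a, b)}) h a = nbrSum G h a - h b :=
            nbrSum_delete_left G hab hadj h
          rw [hb1] at e1; omega
        · by_cases hvb : v = b
          · rw [hvb] at hv ⊢
            have e1 : nbrSum (G.deleteEdges {s(a, b)}) h b = nbrSum G h b - h a :=
              nbrSum_delete_right G hab hadj h
            rw [ha1] at e1; omega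
          · rw [← nbrSum_delete_of_ne G h hva hvb]; exact hv
      have := gamma_le G hop (maj_of_le key hmaj)
      omega

lemma step_lower_both_neg (G : SimpleGraph V) {a b : V} (hab : a ≠ b) (hadj : G.Adj a b)
    {fi : V → ℤ} (hop : IsOpinion fi) (hmaj : Majoritarian G fi)
    (ha : fi a = -1) (hb : fi b = -1) :
    gamma (G.deleteEdges {s(a, b)}) ≤ ∑ v, fi v := by
  set H := G.deleteEdges {s(a, b)} with hH
  have key : ∀ v, 0 < nbrSum G fi v → 0 < nbrSum H fi v := by
    intro v hv
    by_cases hva : v = a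
    · rw [hva] at hv ⊢
      have e1 : nbrSum H fi a = nbrSum G fi a - fi b := nbrSum_delete_left G hab hadj fi
      rw [hb] at e1; omega
    · by_cases hvb : v = b
      · rw [hvb] at hv ⊢
        have e1 : nbrSum H fi b = nbrSum G fi b - fi a := nbrSum_delete_right G hab hadj fi
        rw [ha] at e1; omega
      · rw [nbrSum_delete_of_ne G fi hva hvb]; exact hv
  exact gamma_le H hop (maj_of_le key hmaj)

lemma step_lower_mixed_aux (G : SimpleGraph V) {a b : V} (hab : a ≠ b) (hadj : G.Adj a b)
    {fi : V → ℤ} (hop : IsOpinion fi) (hmaj : Majoritarian G fi)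
    (ha : fi a = 1) (hb : fi b = -1) :
    gamma (G.deleteEdges {s(a, b)}) ≤ (∑ v, fi v) + 2 := by
  set H := G.deleteEdges {s(a, b)} with hH
  set g := flipUp {b} fi with hg
  have hSneg : ∀ v ∈ ({b} : Finset V), fi v = -1 := by
    intro v hv; rw [Finset.mem_singleton] at hv; subst hv; exact hb
  have hgle : ∀ v, fi v ≤ g v := flipUp_le hop
  have hga : g a = fi a := flipUp_eq_of_not_mem (by simp [hab])
  have hgb : g b = 1 := flipUp_eq_of_mem (by simp)
  have key : ∀ v, 0 < nbrSum G fi v → 0 < nbrSum H g v := by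
    intro v hv
    by_cases hva : v = a
    · rw [hva] at hv ⊢
      have e1 : nbrSum H g a = nbrSum G g a - g b := nbrSum_delete_left G hab hadj g
      have e2 : nbrSum G fi a + 2 ≤ nbrSum G g a := by
        refine nbrSum_add_two G hgle (Or.inl hadj) ?_
        rw [hb, hgb]; norm_num
      rw [hgb] at e1
      omega
    · by_cases hvb : v = b
      · rw [hvb] at hv ⊢
        have e1 : nbrSum H g b = nbrSum G g b - g a := nbrSum_delete_right G hab hadj g
        have e2 : nbrSum G fi b + 2 ≤ nbrSum G g b := by
          refine nbrSum_add_two G hgle (Or.inr rfl) ?_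
          rw [hb, hgb]; norm_num
        rw [hga, ha] at e1
        omega
      · have e1 : nbrSum H g v = nbrSum G g v := nbrSum_delete_of_ne G g hva hvb
        have e2 : nbrSum G fi v ≤ nbrSum G g v := nbrSum_mono G hgle v
        omega
  have hsum : ∑ v, g v = (∑ v, fi v) + 2 := by
    rw [hg, sum_flipUp hSneg]; simp
  calc gamma H ≤ ∑ v, g v := gamma_le H (flipUp_opinion hop) (maj_of_le key hmaj)
    _ = (∑ v, fi v) + 2 := hsum

lemma step_lower_both_pos_core (G : SimpleGraph V) {a b : V} (hab : a ≠ b) (hadj : G.Adj a b)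
    {fi : V → ℤ} (hop : IsOpinion fi) (hmaj : Majoritarian G fi)
    (ha : fi a = 1) (hb : fi b = 1) (S : Finset V)
    (hcard : S.card ≤ 2) (hneg : ∀ v ∈ S, fi v = -1)
    (hSa : (∃ c ∈ S, G.Adj a c ∨ c = a) ∨ ∀ c, (G.Adj a c ∨ c = a) → fi c = 1)
    (hSb : (∃ c ∈ S, G.Adj b c ∨ c = b) ∨ ∀ c, (G.Adj b c ∨ c = b) → fi c = 1) :
    gamma (G.deleteEdges {s(a, b)}) ≤ (∑ v, fi v) + 4 := by
  set H := G.deleteEdges {s(a, b)} with hH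
  set g := flipUp S fi with hg
  have hgle : ∀ v, fi v ≤ g v := flipUp_le hop
  have haS : a ∉ S := fun h => by rw [hneg a h] at ha; norm_num at ha
  have hbS : b ∉ S := fun h => by rw [hneg b h] at hb; norm_num at hb
  have hga : g a = fi a := flipUp_eq_of_not_mem haS
  have hgb : g b = fi b := flipUp_eq_of_not_mem hbS
  -- key computations at an endpoint
  have endpoint : ∀ x y : V, x ≠ y → G.Adj x y → fi x = 1 → fi y = 1 →
      ((∃ c ∈ S, G.Adj x c ∨ c = x) ∨ ∀ c, (G.Adj x c ∨ c = x) → fi c = 1) →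
      nbrSum G fi x ≤ nbrSum G g x - 1 ∨ 2 ≤ nbrSum G g x := by
    intro x y hxy hxadj hx hy hcase
    rcases hcase with ⟨c, hcS, hcN⟩ | hall
    · left
      have : nbrSum G fi x + 2 ≤ nbrSum G g x := by
        refine nbrSum_add_two G hgle hcN ?_
        rw [hneg c hcS, hg, flipUp_eq_of_mem hcS]; norm_num
      omega
    · right
      -- all the closed neighbors of x have opinion 1, so nbrSum G fi x = card N[x] ≥ 2
      have hsum1 : nbrSum G fi x = ((univ.filter (fun w => G.Adj x w ∨ w = x)).card : ℤ) := by
        unfold nbrSum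
        rw [Finset.sum_congr rfl fun w hw => hall w (by simpa using hw)]
        rw [Finset.sum_const, nsmul_eq_mul, mul_one]
      have hsubset : ({x, y} : Finset V) ⊆ univ.filter (fun w => G.Adj x w ∨ w = x) := by
        intro w hw
        simp only [Finset.mem_insert, Finset.mem_singleton] at hw
        simp only [mem_filter, mem_univ, true_and]
        rcases hw with rfl | rfl
        · exact Or.inr rfl
        · exact Or.inl hxadj
      have h2 : 2 ≤ (univ.filter (fun w => G.Adj x w ∨ w = x)).card := by
        have := Finset.card_le_card hsubset
        rwa [Finset.card_pair hxy] at this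
      have := nbrSum_mono G hgle x
      omega
  have key : ∀ v, 0 < nbrSum G fi v → 0 < nbrSum H g v := by
    intro v hv
    by_cases hva : v = a
    · rw [hva] at hv ⊢
      have e1 : nbrSum H g a = nbrSum G g a - g b := nbrSum_delete_left G hab hadj g
      rw [hgb, hb] at e1
      rcases endpoint a b hab hadj ha hb hSa with h' | h' <;> omega
    · by_cases hvb : v = b
      · rw [hvb] at hv ⊢
        have e1 : nbrSum H g b = nbrSum G g b - g a := nbrSum_delete_right G hab hadj g
        rw [hga, ha] at e1
        rcases endpoint b a hab.symm hadj.symm hb ha hSb with h' | h' <;> omega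
      · have e1 : nbrSum H g v = nbrSum G g v := nbrSum_delete_of_ne G g hva hvb
        have e2 : nbrSum G fi v ≤ nbrSum G g v := nbrSum_mono G hgle v
        omega
  have hsum : ∑ v, g v = (∑ v, fi v) + 2 * S.card := by rw [hg, sum_flipUp hneg]
  have hc2 : (S.card : ℤ) ≤ 2 := by exact_mod_cast hcard
  calc gamma H ≤ ∑ v, g v := gamma_le H (flipUp_opinion hop) (maj_of_le key hmaj)
    _ ≤ (∑ v, fi v) + 4 := by rw [hsum]; omega

lemma step_lower_both_pos (G : SimpleGraph V) {a b : V} (hab : a ≠ b) (hadj : G.Adj a b)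
    {fi : V → ℤ} (hop : IsOpinion fi) (hmaj : Majoritarian G fi)
    (ha : fi a = 1) (hb : fi b = 1) :
    gamma (G.deleteEdges {s(a, b)}) ≤ (∑ v, fi v) + 4 := by
  have hoverride : ∀ c : V, fi c ≠ -1 → fi c = 1 := fun c h => (hop c).resolve_right h
  by_cases hA : ∃ c, (G.Adj a c ∨ c = a) ∧ fi c = -1
  · obtain ⟨ca, hcaN, hcaneg⟩ := hA
    by_cases hB : ∃ c, (G.Adj b c ∨ c = b) ∧ fi c = -1
    · obtain ⟨cb, hcbN, hcbneg⟩ := hB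
      refine step_lower_both_pos_core G hab hadj hop hmaj ha hb {ca, cb} ?_ ?_ ?_ ?_
      · exact le_trans (Finset.card_insert_le _ _) (by simp)
      · intro v hv
        simp only [Finset.mem_insert, Finset.mem_singleton] at hv
        rcases hv with rfl | rfl
        · exact hcaneg
        · exact hcbneg
      · exact Or.inl ⟨ca, by simp, hcaN⟩
      · exact Or.inl ⟨cb, by simp, hcbN⟩
    · push_neg at hB
      refine step_lower_both_pos_core G hab hadj hop hmaj ha hb {ca} ?_ ?_ ?_ ?_
      · simp
      · intro v hv; rw [Finset.mem_singleton] at hv; subst hv; exact hcaneg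
      · exact Or.inl ⟨ca, by simp, hcaN⟩
      · exact Or.inr fun c hc => hoverride c (hB c hc)
  · push_neg at hA
    by_cases hB : ∃ c, (G.Adj b c ∨ c = b) ∧ fi c = -1
    · obtain ⟨cb, hcbN, hcbneg⟩ := hB
      refine step_lower_both_pos_core G hab hadj hop hmaj ha hb {cb} ?_ ?_ ?_ ?_
      · simp
      · intro v hv; rw [Finset.mem_singleton] at hv; subst hv; exact hcbneg
      · exact Or.inr fun c hc => hoverride c (hA c hc)
      · exact Or.inl ⟨cb, by simp, hcbN⟩
    · push_neg at hB
      refine step_lower_both_pos_core G hab hadj hop hmaj ha hb ∅ ?_ ?_ ?_ ?_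
      · simp
      · simp
      · exact Or.inr fun c hc => hoverride c (hA c hc)
      · exact Or.inr fun c hc => hoverride c (hB c hc)

/-- Combined lower bound for one deletion step. -/
lemma step_lower (G : SimpleGraph V) {a b : V} (hab : a ≠ b) (hadj : G.Adj a b)
    {fi : V → ℤ} (hop : IsOpinion fi) (hmaj : Majoritarian G fi)
    (hsum : ∑ v, fi v = gamma G) :
    (if fi a = 1 ∧ fi b = 1 then (-4 : ℤ) else if fi a = -1 ∧ fi b = -1 then 0 else -2)
      ≤ gamma G - gamma (G.deleteEdges {s(a, b)}) := by
  rcases hop a with ha | ha <;> rcases hop b with hb | hb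
  · rw [if_pos ⟨ha, hb⟩]
    have := step_lower_both_pos G hab hadj hop hmaj ha hb
    omega
  · rw [if_neg (by simp [hb]), if_neg (by simp [ha])]
    have := step_lower_mixed_aux G hab hadj hop hmaj ha hb
    omega
  · rw [if_neg (by simp [ha]), if_neg (by simp [hb])]
    have hswap : ({s(a, b)} : Set (Sym2 V)) = {s(b, a)} := by rw [Sym2.eq_swap]
    rw [hswap]
    have := step_lower_mixed_aux G hab.symm hadj.symm hop hmaj hb ha
    omega
  · rw [if_neg (by simp [ha]), if_pos ⟨ha, hb⟩]
    have := step_lower_both_neg G hab hadj hop hmaj ha hb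
    omega

end Steps

lemma telescope_gamma {k : ℕ} (g : Fin (k + 1) → ℤ) :
    ∑ i : Fin k, (g i.castSucc - g i.succ) = g 0 - g (Fin.last k) := by
  set F : ℕ → ℤ := fun n => g ⟨min n k, Nat.lt_succ_of_le (Nat.min_le_right n k)⟩ with hF
  have key := Finset.sum_range_sub' F k
  have h1 : ∑ i : Fin k, (F i - F (i + 1)) = ∑ i ∈ Finset.range k, (F i - F (i + 1)) :=
    Fin.sum_univ_eq_sum_range (fun n => F n - F (n + 1)) k
  have h2 : ∀ i : Fin k, g i.castSucc - g i.succ = F (i : ℕ) - F ((i : ℕ) + 1) := by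
    intro i
    have hi := i.isLt
    have e1 : (⟨min (i : ℕ) k, Nat.lt_succ_of_le (Nat.min_le_right _ k)⟩ : Fin (k + 1))
        = i.castSucc := Fin.ext (by simp [Fin.coe_castSucc, Nat.min_eq_left hi.le])
    have e2 : (⟨min ((i : ℕ) + 1) k, Nat.lt_succ_of_le (Nat.min_le_right _ k)⟩ : Fin (k + 1))
        = i.succ := Fin.ext (by simp [Fin.val_succ, Nat.min_eq_left (Nat.succ_le_of_lt hi)])
    rw [hF]
    simp only
    rw [e1, e2]
  have e0 : (⟨min 0 k, Nat.lt_succ_of_le (Nat.min_le_right 0 k)⟩ : Fin (k + 1)) = 0 :=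
    Fin.ext (by simp)
  have ek : (⟨min k k, Nat.lt_succ_of_le (Nat.min_le_right k k)⟩ : Fin (k + 1)) = Fin.last k :=
    Fin.ext (by simp [Fin.last])
  calc ∑ i : Fin k, (g i.castSucc - g i.succ)
      = ∑ i : Fin k, (F (i : ℕ) - F ((i : ℕ) + 1)) := Finset.sum_congr rfl fun i _ => h2 i
    _ = ∑ i ∈ Finset.range k, (F i - F (i + 1)) := h1
    _ = F 0 - F k := key
    _ = g 0 - g (Fin.last k) := by rw [hF]; simp only; rw [e0, ek]

theorem stmt7 {V : Type*} [Fintype V] [Nonempty V] (G H : SimpleGraph V) (l q m : ℕ)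
    (Gs : Fin (l + q + m + 1) → SimpleGraph V)
    (e : Fin (l + q + m) → V × V)
    (f : Fin (l + q + m) → V → ℤ)
    (h0 : Gs 0 = G) (hlast : Gs (Fin.last _) = H)
    (hstep : ∀ i : Fin (l + q + m),
      (e i).1 ≠ (e i).2 ∧ (Gs i.castSucc).Adj (e i).1 (e i).2 ∧
        Gs i.succ = (Gs i.castSucc).deleteEdges {s((e i).1, (e i).2)})
    (hopt : ∀ i : Fin (l + q + m), IsOpinion (f i) ∧ Majoritarian (Gs i.castSucc) (f i) ∧
      ∑ w, f i w = gamma (Gs i.castSucc))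
    (hl : l = (univ.filter (fun i : Fin (l + q + m) =>
      f i (e i).1 = 1 ∧ f i (e i).2 = 1)).card)
    (hq : q = (univ.filter (fun i : Fin (l + q + m) =>
      f i (e i).1 = -1 ∧ f i (e i).2 = -1)).card) :
    -4 * l - 2 * m ≤ gamma G - gamma H ∧ gamma G - gamma H ≤ 2 * (l + q + m) := by
  have tel : ∑ i : Fin (l + q + m), (gamma (Gs i.castSucc) - gamma (Gs i.succ))
      = gamma G - gamma H := by
    rw [← h0, ← hlast]
    exact telescope_gamma (fun j => gamma (Gs j))
  have hupper : gamma G - gamma H ≤ 2 * (l + q + m) := by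
    rw [← tel]
    calc ∑ i : Fin (l + q + m), (gamma (Gs i.castSucc) - gamma (Gs i.succ))
        ≤ ∑ _i : Fin (l + q + m), (2 : ℤ) := by
          refine Finset.sum_le_sum fun i _ => ?_
          obtain ⟨hne, hadj, hdel⟩ := hstep i
          rw [hdel]
          exact step_upper (Gs i.castSucc) hne hadj
      _ = 2 * (l + q + m) := by
          rw [Finset.sum_const, nsmul_eq_mul, Finset.card_univ, Fintype.card_fin]
          push_cast
          ring
  refine ⟨?_, hupper⟩
  have hlower : ∀ i : Fin (l + q + m),
      (if f i (e i).1 = 1 ∧ f i (e i).2 = 1 then (-4 : ℤ)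
        else if f i (e i).1 = -1 ∧ f i (e i).2 = -1 then 0 else -2)
      ≤ gamma (Gs i.castSucc) - gamma (Gs i.succ) := by
    intro i
    obtain ⟨hne, hadj, hdel⟩ := hstep i
    obtain ⟨hop, hmaj, hsum⟩ := hopt i
    rw [hdel]
    exact step_lower (Gs i.castSucc) hne hadj hop hmaj hsum
  have hsum_c : ∑ i : Fin (l + q + m),
      (if f i (e i).1 = 1 ∧ f i (e i).2 = 1 then (-4 : ℤ)
        else if f i (e i).1 = -1 ∧ f i (e i).2 = -1 then 0 else -2)
      = -4 * l - 2 * m := by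
    have hpoint : ∀ i : Fin (l + q + m),
        (if f i (e i).1 = 1 ∧ f i (e i).2 = 1 then (-4 : ℤ)
          else if f i (e i).1 = -1 ∧ f i (e i).2 = -1 then 0 else -2)
        = -2 + (-2) * (if f i (e i).1 = 1 ∧ f i (e i).2 = 1 then (1 : ℤ) else 0)
            + 2 * (if f i (e i).1 = -1 ∧ f i (e i).2 = -1 then (1 : ℤ) else 0) := by
      intro i
      by_cases h1 : f i (e i).1 = 1 ∧ f i (e i).2 = 1
      · have h2 : ¬ (f i (e i).1 = -1 ∧ f i (e i).2 = -1) := by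
          rintro ⟨hc, -⟩; rw [h1.1] at hc; norm_num at hc
        rw [if_pos h1, if_pos h1, if_neg h2]
        ring
      · rw [if_neg h1, if_neg h1]
        by_cases h2 : f i (e i).1 = -1 ∧ f i (e i).2 = -1
        · rw [if_pos h2, if_pos h2]; ring
        · rw [if_neg h2, if_neg h2]; ring
    rw [Finset.sum_congr rfl fun i _ => hpoint i]
    rw [Finset.sum_add_distrib, Finset.sum_add_distrib, ← Finset.mul_sum, ← Finset.mul_sum,
      Finset.sum_boole, Finset.sum_boole, Finset.sum_const, nsmul_eq_mul,
      Finset.card_univ, Fintype.card_fin, ← hl, ← hq]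
    push_cast
    ring
  rw [← tel, ← hsum_c]
  exact Finset.sum_le_sum fun i _ => hlower i
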